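/- (Generalized Schwartz–Zippel lemma for downward closed sets.) Let F be a field, m, d, n natural numbers, u : {0,…,n−1} → F an injective map, and S ⊆ {0,…,n−1}^m a nonempty downward closed set. Suppose the d-robustness satisfies Π_d(S) ≥ δ·|S| for some δ ∈ [0,1]. Then for every nonzero polynomial f ∈ F[X₁,…,X_m] of total degree at most d, the number of points x ∈ S with f(u(x₁),…,u(x_m)) = 0 is at most (1−δ)·|S|; equivalently, f is nonzero at at least δ·|S| of the embedded points. -/

import Mathlib

open Finset

/-- If `v` is antitone on `Fin n` and `Z` has at most `t` elements, then the sum of `v`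
outside `Z` is at least the sum of `v` over indices `≥ t`. -/
lemma fiber_sum {n : ℕ} (v : Fin n → ℕ) (hv : ∀ i j : Fin n, i ≤ j → v j ≤ v i) :
    ∀ (t : ℕ) (Z : Finset (Fin n)), Z.card ≤ t →
      ∑ j ∈ univ.filter (fun j : Fin n => t ≤ (j : ℕ)), v j ≤ ∑ j ∈ Zᶜ, v j := by
  intro t
  induction t with
  | zero =>
    intro Z hZ
    have : Z = ∅ := Finset.card_eq_zero.mp (Nat.le_zero.mp hZ)
    subst this
    simp
  | succ t ih =>
    intro Z hZ
    rcases le_or_gt Z.card t with h | h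
    · calc ∑ j ∈ univ.filter (fun j : Fin n => t + 1 ≤ (j : ℕ)), v j
          ≤ ∑ j ∈ univ.filter (fun j : Fin n => t ≤ (j : ℕ)), v j := by
            apply Finset.sum_le_sum_of_subset
            intro j hj
            simp only [Finset.mem_filter, Finset.mem_univ, true_and] at *
            omega
        _ ≤ _ := ih Z h
    · have hcard : Z.card = t + 1 := le_antisymm hZ h
      have hne : Z.Nonempty := Finset.card_pos.mp (by omega)
      set z := Z.max' hne with hzdef
      have hzZ : z ∈ Z := Z.max'_mem hne
      have hzt : t ≤ (z : ℕ) := by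
        have hsub : Z ⊆ Finset.Iic z := fun a ha => Finset.mem_Iic.mpr (Z.le_max' a ha)
        have := Finset.card_le_card hsub
        rw [Fin.card_Iic] at this
        omega
      have htn : t < n := lt_of_le_of_lt hzt z.isLt
      set tf : Fin n := ⟨t, htn⟩ with htf
      have key1 : ∑ j ∈ univ.filter (fun j : Fin n => t ≤ (j : ℕ)), v j
          ≤ ∑ j ∈ (Z.erase z)ᶜ, v j :=
        ih _ (by rw [Finset.card_erase_of_mem hzZ, hcard]; omega)
      have hsplit : univ.filter (fun j : Fin n => t ≤ (j : ℕ))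
          = insert tf (univ.filter (fun j : Fin n => t + 1 ≤ (j : ℕ))) := by
        ext j
        simp only [Finset.mem_filter, Finset.mem_univ, true_and, Finset.mem_insert,
          Fin.ext_iff, htf]
        omega
      have htf_not : tf ∉ univ.filter (fun j : Fin n => t + 1 ≤ (j : ℕ)) := by
        simp [htf]
      have hsplit2 : (Z.erase z)ᶜ = insert z Zᶜ := by
        ext j
        simp only [Finset.mem_compl, Finset.mem_erase, Finset.mem_insert, not_and_or, not_not]
        try tauto
      have hz_not : z ∉ Zᶜ := by simpa using hzZ
      rw [hsplit, Finset.sum_insert htf_not] at key1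
      rw [hsplit2, Finset.sum_insert hz_not] at key1
      have hvz : v z ≤ v tf := hv tf z (by simpa [Fin.le_def, htf] using hzt)
      omega

section
open scoped Classical

/-- Key lemma: weighted Schwartz-Zippel with antitone weights. -/
lemma sz_key {F : Type*} [Field F] :
    ∀ (m : ℕ) {n : ℕ} (u : Fin n → F), Function.Injective u →
    ∀ (w : (Fin m → Fin n) → ℕ),
      (∀ x y : Fin m → Fin n, (∀ i, x i ≤ y i) → w y ≤ w x) →
    ∀ (f : MvPolynomial (Fin m) F), f ≠ 0 → ∀ e : ℕ, f.totalDegree ≤ e →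
    ∃ dv : Fin m → ℕ, (∑ i, dv i) ≤ e ∧
      ∑ x ∈ univ.filter (fun x : Fin m → Fin n => ∀ i, dv i ≤ (x i : ℕ)), w x ≤
      ∑ x ∈ univ.filter
          (fun x : Fin m → Fin n => MvPolynomial.eval (fun i => u (x i)) f ≠ 0), w x := by
  intro m
  induction m with
  | zero =>
    intro n u hu w hw f hf e he
    refine ⟨0, by simp, ?_⟩
    obtain ⟨a, rfl⟩ := MvPolynomial.C_surjective (Fin 0) f
    have ha : a ≠ 0 := fun h => hf (by rw [h, map_zero])
    apply Finset.sum_le_sum_of_subset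
    intro x hx
    simp only [Finset.mem_filter, Finset.mem_univ, true_and]
    simp [MvPolynomial.eval_C, ha]
  | succ m ih =>
    intro n u hu w hw f hf e he
    have hp0 : MvPolynomial.finSuccEquiv F m f ≠ 0 := fun h =>
      hf ((MvPolynomial.finSuccEquiv F m).injective (by rw [h, map_zero]))
    set p := MvPolynomial.finSuccEquiv F m f with hp
    set t := p.natDegree with ht
    have hft : p.coeff t ≠ 0 := by
      have h := Polynomial.leadingCoeff_ne_zero.mpr hp0
      rwa [Polynomial.leadingCoeff] at h
    set ft := p.coeff t with hftdef
    have htd : ft.totalDegree + t ≤ f.totalDegree :=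
      MvPolynomial.totalDegree_coeff_finSuccEquiv_add_le f t hft
    have hte : t ≤ e := le_trans (le_trans (Nat.le_add_left _ _) htd) he
    -- weight for the induction
    set w' : (Fin m → Fin n) → ℕ :=
      fun x' => ∑ j ∈ univ.filter (fun j : Fin n => t ≤ (j : ℕ)), w (Fin.cons j x') with hw'def
    have hw' : ∀ x y : Fin m → Fin n, (∀ i, x i ≤ y i) → w' y ≤ w' x := by
      intro x y hxy
      apply Finset.sum_le_sum
      intro j _
      apply hw
      intro i
      refine Fin.cases ?_ ?_ i
      · simp
      · intro k; simpa using hxy k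
    obtain ⟨dv', hdvsum, hbound⟩ := ih u hu w' hw' ft hft (e - t) (by omega)
    refine ⟨Fin.cons t dv', ?_, ?_⟩
    · simp only [Fin.sum_univ_succ, Fin.cons_zero, Fin.cons_succ]
      exact le_trans (Nat.add_le_add_left hdvsum t) (le_of_eq (Nat.add_sub_cancel' hte))
    have hiff : ∀ (j : Fin n) (x' : Fin m → Fin n),
        (∀ i, (Fin.cons t dv' : Fin (m+1) → ℕ) i ≤ ((Fin.cons j x' : Fin (m+1) → Fin n) i : ℕ))
          ↔ (t ≤ (j : ℕ) ∧ ∀ i, dv' i ≤ (x' i : ℕ)) := by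
      intro j x'
      constructor
      · intro h
        exact ⟨by simpa using h 0, fun i => by simpa using h i.succ⟩
      · rintro ⟨h1, h2⟩ i
        refine Fin.cases ?_ ?_ i
        · simpa using h1
        · intro k; simpa using h2 k
    calc ∑ x ∈ univ.filter
            (fun x : Fin (m+1) → Fin n => ∀ i, (Fin.cons t dv' : Fin (m+1) → ℕ) i ≤ (x i : ℕ)), w x
        = ∑ x' ∈ univ.filter (fun x' : Fin m → Fin n => ∀ i, dv' i ≤ (x' i : ℕ)), w' x' := by
          rw [Finset.sum_filter, Finset.sum_filter]
          rw [← Fintype.sum_equiv (Fin.consEquiv (fun _ : Fin (m+1) => Fin n))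
            (fun q : Fin n × (Fin m → Fin n) =>
              if (∀ i, (Fin.cons t dv' : Fin (m+1) → ℕ) i ≤ ((Fin.cons q.1 q.2 : Fin (m+1) → Fin n) i : ℕ))
                then w (Fin.cons q.1 q.2) else 0)
            (fun x : Fin (m+1) → Fin n =>
              if (∀ i, (Fin.cons t dv' : Fin (m+1) → ℕ) i ≤ (x i : ℕ)) then w x else 0)
            (fun q => rfl)]
          rw [Fintype.sum_prod_type, Finset.sum_comm]
          apply Finset.sum_congr rfl
          intro x' _
          by_cases hx : ∀ i, dv' i ≤ (x' i : ℕ)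
          · rw [if_pos hx]
            have hwx : w' x' = ∑ j : Fin n, if t ≤ (j : ℕ) then w (Fin.cons j x') else 0 :=
              Finset.sum_filter _ _
            rw [hwx]
            apply Finset.sum_congr rfl
            intro j _
            simp [hiff j x', hx]
          · rw [if_neg hx]
            apply Finset.sum_eq_zero
            intro j _
            simp [hiff j x', hx]
      _ ≤ ∑ x' ∈ univ.filter
            (fun x' : Fin m → Fin n =>
              MvPolynomial.eval (fun i => u (x' i)) ft ≠ 0), w' x' := hbound
      _ ≤ ∑ x ∈ univ.filter
            (fun x : Fin (m+1) → Fin n =>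
              MvPolynomial.eval (fun i => u (x i)) f ≠ 0), w x := by
          rw [Finset.sum_filter, Finset.sum_filter]
          rw [← Fintype.sum_equiv (Fin.consEquiv (fun _ : Fin (m+1) => Fin n))
            (fun q : Fin n × (Fin m → Fin n) =>
              if MvPolynomial.eval (fun i => u ((Fin.cons q.1 q.2 : Fin (m+1) → Fin n) i)) f ≠ 0
                then w (Fin.cons q.1 q.2) else 0)
            (fun x : Fin (m+1) → Fin n =>
              if MvPolynomial.eval (fun i => u (x i)) f ≠ 0 then w x else 0)
            (fun q => rfl)]
          rw [Fintype.sum_prod_type, Finset.sum_comm]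
          apply Finset.sum_le_sum
          intro x' _
          by_cases hx : MvPolynomial.eval (fun i => u (x' i)) ft ≠ 0
          · rw [if_pos hx]
            -- fiber estimate
            set g : Polynomial F := p.map (MvPolynomial.eval (fun i => u (x' i))) with hg
            have hgt : g.coeff t ≠ 0 := by
              simpa [hg, Polynomial.coeff_map] using hx
            have hg0 : g ≠ 0 := fun h => hgt (by simp [h])
            have hgdeg : g.natDegree = t :=
              le_antisymm (Polynomial.natDegree_map_le)
                (Polynomial.le_natDegree_of_ne_zero hgt)
            have heval : ∀ j : Fin n,
                MvPolynomial.eval (fun i => u ((Fin.cons j x' : Fin (m+1) → Fin n) i)) f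
                  = g.eval (u j) := by
              intro j
              have hfun : (fun i => u ((Fin.cons j x' : Fin (m+1) → Fin n) i))
                  = Fin.cons (u j) (fun i => u (x' i)) := by
                funext i
                refine Fin.cases ?_ ?_ i <;> simp
              rw [hfun, MvPolynomial.eval_eq_eval_mv_eval']
            set Z : Finset (Fin n) := univ.filter (fun j => g.eval (u j) = 0) with hZ
            have hZcard : Z.card ≤ t := by
              have h1 : Z.card ≤ g.roots.toFinset.card := by
                apply Finset.card_le_card_of_injOn (fun j => u j)
                · intro j hj
                  rw [Finset.mem_coe, Multiset.mem_toFinset, Polynomial.mem_roots hg0]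
                  simp only [hZ, Finset.mem_coe, Finset.mem_filter] at hj
                  exact hj.2
                · exact Function.Injective.injOn hu
              calc Z.card ≤ g.roots.toFinset.card := h1
                _ ≤ Multiset.card g.roots := Multiset.toFinset_card_le _
                _ ≤ g.natDegree := Polynomial.card_roots' g
                _ = t := hgdeg
            have hfs := fiber_sum (fun j => w (Fin.cons j x'))
              (fun i j hij => hw _ _ (fun k => by
                refine Fin.cases ?_ ?_ k
                · simpa using hij
                · intro l; simp)) t Z hZcard
            have hcompl : Zᶜ = univ.filter (fun j : Fin n =>
                MvPolynomial.eval (fun i => u ((Fin.cons j x' : Fin (m+1) → Fin n) i)) f ≠ 0) := by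
              ext j
              simp [hZ, heval j]
            calc w' x' ≤ ∑ j ∈ Zᶜ, w (Fin.cons j x') := hfs
              _ = ∑ j : Fin n, if MvPolynomial.eval
                    (fun i => u ((Fin.cons j x' : Fin (m+1) → Fin n) i)) f ≠ 0
                    then w (Fin.cons j x') else 0 := by
                  rw [hcompl, Finset.sum_filter]
          · rw [if_neg hx]
            exact Nat.zero_le _

theorem stmt_8 {F : Type*} [Field F] (m d n : ℕ)
    (u : Fin n → F) (hu : Function.Injective u)
    (S : Set (Fin m → Fin n)) (hne : S.Nonempty)
    (hdc : ∀ y ∈ S, ∀ x : Fin m → Fin n, (∀ i, x i ≤ y i) → x ∈ S)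
    (δ : ℝ) (hδ0 : 0 ≤ δ) (hδ1 : δ ≤ 1)
    (hrob : ∀ dv : Fin m → ℕ, (∑ i, dv i) = d →
      δ * S.ncard ≤ ({x ∈ S | ∀ i, dv i ≤ (x i : ℕ)}.ncard : ℝ))
    (f : MvPolynomial (Fin m) F) (hf : f ≠ 0) (hfd : f.totalDegree ≤ d) :
    (({x ∈ S | MvPolynomial.eval (fun i => u (x i)) f = 0}.ncard : ℝ) ≤ (1 - δ) * S.ncard) ∧
    (δ * S.ncard ≤ ({x ∈ S | MvPolynomial.eval (fun i => u (x i)) f ≠ 0}.ncard : ℝ)) := by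
  classical
  have hcard : ∀ P : (Fin m → Fin n) → Prop,
      {x ∈ S | P x}.ncard = (univ.filter (fun x => x ∈ S ∧ P x)).card := by
    intro P
    rw [show {x ∈ S | P x} = ↑(univ.filter (fun x => x ∈ S ∧ P x)) by
      ext x; simp [Set.mem_setOf_eq]]
    exact Set.ncard_coe_finset _
  have hcardS : S.ncard = (univ.filter (fun x : Fin m → Fin n => x ∈ S)).card := by
    have hSeq : S = ↑(univ.filter (fun x : Fin m → Fin n => x ∈ S)) := by ext x; simp
    conv_lhs => rw [hSeq]
    exact Set.ncard_coe_finset _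
  set a := {x ∈ S | MvPolynomial.eval (fun i => u (x i)) f = 0}.ncard with ha
  set b := {x ∈ S | MvPolynomial.eval (fun i => u (x i)) f ≠ 0}.ncard with hb
  set s := S.ncard with hs
  have hab : a + b = s := by
    rw [ha, hb, hs]
    have hD : Disjoint {x ∈ S | MvPolynomial.eval (fun i => u (x i)) f = 0}
        {x ∈ S | MvPolynomial.eval (fun i => u (x i)) f ≠ 0} := by
      rw [Set.disjoint_left]
      rintro x ⟨_, h0⟩ ⟨_, h1⟩
      exact h1 h0
    have hU : {x ∈ S | MvPolynomial.eval (fun i => u (x i)) f = 0}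
        ∪ {x ∈ S | MvPolynomial.eval (fun i => u (x i)) f ≠ 0} = S := by
      ext x
      by_cases h : MvPolynomial.eval (fun i => u (x i)) f = 0 <;> simp [h]
    calc {x ∈ S | MvPolynomial.eval (fun i => u (x i)) f = 0}.ncard
          + {x ∈ S | MvPolynomial.eval (fun i => u (x i)) f ≠ 0}.ncard
        = ({x ∈ S | MvPolynomial.eval (fun i => u (x i)) f = 0}
            ∪ {x ∈ S | MvPolynomial.eval (fun i => u (x i)) f ≠ 0}).ncard :=
          (Set.ncard_union_eq hD (Set.toFinite _) (Set.toFinite _)).symm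
      _ = S.ncard := by rw [hU]
  have hbs : δ * (s : ℝ) ≤ (b : ℝ) := by
    rcases Nat.eq_zero_or_pos m with hm | hm
    · subst hm
      obtain ⟨c, rfl⟩ := MvPolynomial.C_surjective (Fin 0) f
      have hc : c ≠ 0 := fun h => hf (by rw [h, map_zero])
      have hbs' : b = s := by
        rw [hb, hs]
        rw [show {x ∈ S | MvPolynomial.eval (fun i => u (x i)) (MvPolynomial.C c) ≠ 0} = S from by
          ext x; simp [MvPolynomial.eval_C, hc]]
      rw [hbs']
      calc δ * (s : ℝ) ≤ 1 * (s : ℝ) :=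
            mul_le_mul_of_nonneg_right hδ1 (Nat.cast_nonneg _)
        _ = (s : ℝ) := one_mul _
    · set w : (Fin m → Fin n) → ℕ := fun x => if x ∈ S then 1 else 0 with hwdef
      have hw : ∀ x y : Fin m → Fin n, (∀ i, x i ≤ y i) → w y ≤ w x := by
        intro x y hxy
        by_cases hy : y ∈ S
        · have hxS : x ∈ S := hdc y hy x hxy
          simp [hwdef, hy, hxS]
        · simp [hwdef, hy]
      obtain ⟨dv, hsum, hineq⟩ := sz_key m u hu w hw f hf d hfd
      set i0 : Fin m := ⟨0, hm⟩ with hi0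
      set dv' : Fin m → ℕ := fun i => dv i + (if i = i0 then d - ∑ j, dv j else 0) with hdv'
      have hsum' : (∑ i, dv' i) = d := by
        rw [hdv']
        rw [Finset.sum_add_distrib]
        rw [Finset.sum_ite_eq' univ i0 (fun _ => d - ∑ j, dv j)]
        simp only [Finset.mem_univ, if_true]
        exact Nat.add_sub_cancel' hsum
      have hdvle : ∀ i, dv i ≤ dv' i := by
        intro i; rw [hdv']; exact Nat.le_add_right _ _
      have h1 := hrob dv' hsum'
      have h2 : ({x ∈ S | ∀ i, dv' i ≤ (x i : ℕ)}.ncard : ℝ)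
          ≤ ({x ∈ S | ∀ i, dv i ≤ (x i : ℕ)}.ncard : ℝ) := by
        have := Set.ncard_le_ncard (s := {x ∈ S | ∀ i, dv' i ≤ (x i : ℕ)})
          (t := {x ∈ S | ∀ i, dv i ≤ (x i : ℕ)})
          (fun x hx => ⟨hx.1, fun i => le_trans (hdvle i) (hx.2 i)⟩) (Set.toFinite _)
        exact_mod_cast this
      have hsum_card : ∀ (P : (Fin m → Fin n) → Prop) (inst : DecidablePred P),
          ∑ x ∈ @Finset.filter _ P inst univ, w x = {x ∈ S | P x}.ncard := by
        intro P inst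
        rw [hcard P, Finset.card_eq_sum_ones, Finset.sum_filter, Finset.sum_filter]
        apply Finset.sum_congr rfl
        intro x _
        by_cases hxP : P x <;> by_cases hxS : x ∈ S <;> simp [hwdef, hxP, hxS]
      have h3 : {x ∈ S | ∀ i, dv i ≤ (x i : ℕ)}.ncard ≤ b := by
        rw [hb]
        calc {x ∈ S | ∀ i, dv i ≤ (x i : ℕ)}.ncard
            = ∑ x ∈ univ.filter (fun x : Fin m → Fin n => ∀ i, dv i ≤ (x i : ℕ)), w x :=
              (hsum_card _ _).symm
          _ ≤ ∑ x ∈ univ.filter (fun x : Fin m → Fin n =>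
                MvPolynomial.eval (fun i => u (x i)) f ≠ 0), w x := hineq
          _ = {x ∈ S | MvPolynomial.eval (fun i => u (x i)) f ≠ 0}.ncard := hsum_card _ _
      calc δ * (s : ℝ) = δ * (S.ncard : ℝ) := by rw [hs]
        _ ≤ ({x ∈ S | ∀ i, dv' i ≤ (x i : ℕ)}.ncard : ℝ) := h1
        _ ≤ ({x ∈ S | ∀ i, dv i ≤ (x i : ℕ)}.ncard : ℝ) := h2
        _ ≤ (b : ℝ) := by exact_mod_cast h3
  have hcast : (a : ℝ) + (b : ℝ) = (s : ℝ) := by exact_mod_cast hab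
  constructor
  · nlinarith [hbs, hcast, Nat.cast_nonneg (α := ℝ) s]
  · exact hbs
end
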